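/- The walking parallel pair category (objects zero and one, with two non-identity morphisms left, right : zero ⟶ one) has exactly 4 Grothendieck topologies. -/

import Mathlib

open CategoryTheory CategoryTheory.Limits

namespace Stmt18Aux

open WalkingParallelPair WalkingParallelPairHom

lemma to_zero_eq {X : WalkingParallelPair} (f : X ⟶ WalkingParallelPair.zero) :
    X = WalkingParallelPair.zero := by
  change WalkingParallelPairHom _ _ at f
  cases f; rfl

/-- The sieve {left, right} on `one`. -/
def lr : Sieve WalkingParallelPair.one where
  arrows Y _ := Y = WalkingParallelPair.zero
  downward_closed := by
    intro Y Z f hf g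
    exact to_zero_eq (g ≫ eqToHom hf)

lemma lr_ne_top : lr ≠ ⊤ := by
  intro h
  have : lr (𝟙 one) := by rw [h]; trivial
  exact WalkingParallelPair.noConfusion this

lemma sieve_zero (S : Sieve WalkingParallelPair.zero) : S = ⊤ ∨ S = ⊥ := by
  by_cases h : S (𝟙 zero)
  · exact Or.inl (Sieve.id_mem_iff_eq_top.mp h)
  · refine Or.inr (Sieve.ext ?_)
    intro Y f
    change WalkingParallelPairHom _ _ at f
    cases f
    constructor
    · intro hf; exact absurd hf h
    · intro hf; exact hf.elim

lemma bot_ne_top_zero : (⊥ : Sieve WalkingParallelPair.zero) ≠ ⊤ := by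
  intro h
  have : (⊥ : Sieve WalkingParallelPair.zero) (𝟙 zero) := by rw [h]; trivial
  exact this.elim

/-- The family of Grothendieck topologies. -/
def myTop (p q : Prop) : GrothendieckTopology WalkingParallelPair where
  sieves X := match X with
    | WalkingParallelPair.zero => {S | S = ⊤ ∨ p}
    | WalkingParallelPair.one => {S | S = ⊤ ∨ (q ∧ lr ≤ S) ∨ (p ∧ q)}
  top_mem' X := by cases X <;> exact Or.inl rfl
  pullback_stable' := by
    intro X Y S f hS
    change WalkingParallelPairHom _ _ at f
    cases f with
    | id =>
      rw [walkingParallelPairHom_id, Sieve.pullback_id]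
      exact hS
    | left =>
      rcases hS with h | ⟨hq, hle⟩ | hpq
      · subst h; exact Or.inl (by simp)
      · refine Or.inl (Sieve.id_mem_iff_eq_top.mp ?_)
        show S (𝟙 zero ≫ left)
        rw [Category.id_comp]
        exact hle _ rfl
      · exact Or.inr hpq.1
    | right =>
      rcases hS with h | ⟨hq, hle⟩ | hpq
      · subst h; exact Or.inl (by simp)
      · refine Or.inl (Sieve.id_mem_iff_eq_top.mp ?_)
        show S (𝟙 zero ≫ right)
        rw [Category.id_comp]
        exact hle _ rfl
      · exact Or.inr hpq.1
  transitive' := by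
    intro X S hS R hR
    cases X with
    | zero =>
      rcases hS with h | hp
      · subst h
        have := hR (f := 𝟙 zero) trivial
        rwa [Sieve.pullback_id] at this
      · exact Or.inr hp
    | one =>
      rcases hS with h | ⟨hq, hle⟩ | hpq
      · subst h
        have := hR (f := 𝟙 one) trivial
        rwa [Sieve.pullback_id] at this
      · have hl := hR (f := (left : zero ⟶ one)) (hle _ rfl)
        have hr := hR (f := (right : zero ⟶ one)) (hle _ rfl)
        rcases hl with hl | hp
        · rcases hr with hr | hp
          · refine Or.inr (Or.inl ⟨hq, ?_⟩)
            intro Y f hf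
            cases hf
            change WalkingParallelPairHom _ _ at f
            cases f with
            | left =>
              have : (R.pullback left) (𝟙 zero) := by rw [hl]; trivial
              simpa using this
            | right =>
              have : (R.pullback right) (𝟙 zero) := by rw [hr]; trivial
              simpa using this
          · exact Or.inr (Or.inr ⟨hp, hq⟩)
        · exact Or.inr (Or.inr ⟨hp, hq⟩)
      · exact Or.inr (Or.inr hpq)

lemma classify_one (J : GrothendieckTopology WalkingParallelPair)
    (S : Sieve WalkingParallelPair.one) :
    S ∈ J.sieves one ↔
      S = ⊤ ∨ (lr ∈ J.sieves one ∧ lr ≤ S) ∨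
        ((⊥ : Sieve WalkingParallelPair.zero) ∈ J.sieves zero ∧ lr ∈ J.sieves one) := by
  constructor
  · intro hS
    by_cases hid : S (𝟙 one)
    · exact Or.inl (Sieve.id_mem_iff_eq_top.mp hid)
    · have hSlr : S ≤ lr := by
        intro Y f hf
        change WalkingParallelPairHom _ _ at f
        cases f with
        | id => exact absurd hf hid
        | left => rfl
        | right => rfl
      have hlrJ : lr ∈ J.sieves one := J.superset_covering hSlr hS
      by_cases hl : S left
      · by_cases hr : S right
        · refine Or.inr (Or.inl ⟨hlrJ, ?_⟩)
          intro Y f hf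
          cases hf
          change WalkingParallelPairHom _ _ at f
          cases f with
          | left => exact hl
          | right => exact hr
        · refine Or.inr (Or.inr ⟨?_, hlrJ⟩)
          have hp := J.pullback_stable (right : zero ⟶ one) hS
          rcases sieve_zero (S.pullback right) with h | h
          · exfalso
            have : (S.pullback right) (𝟙 zero) := by rw [h]; trivial
            rw [Sieve.pullback_apply, Category.id_comp] at this
            exact hr this
          · rwa [h] at hp
      · refine Or.inr (Or.inr ⟨?_, hlrJ⟩)
        have hp := J.pullback_stable (left : zero ⟶ one) hS
        rcases sieve_zero (S.pullback left) with h | h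
        · exfalso
          have : (S.pullback left) (𝟙 zero) := by rw [h]; trivial
          rw [Sieve.pullback_apply, Category.id_comp] at this
          exact hl this
        · rwa [h] at hp
  · rintro (h | ⟨hq, hle⟩ | ⟨hp, hq⟩)
    · subst h; exact J.top_mem one
    · exact J.superset_covering hle hq
    · refine J.transitive hq S ?_
      intro Y f hf
      cases hf
      rcases sieve_zero (S.pullback f) with h | h
      · rw [h]; exact J.top_mem zero
      · rw [h]; exact hp

lemma classify_zero (J : GrothendieckTopology WalkingParallelPair)
    (S : Sieve WalkingParallelPair.zero) :
    S ∈ J.sieves zero ↔ S = ⊤ ∨ (⊥ : Sieve WalkingParallelPair.zero) ∈ J.sieves zero := by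
  constructor
  · intro hS
    rcases sieve_zero S with h | h
    · exact Or.inl h
    · rw [h] at hS; exact Or.inr hS
  · rintro (h | h)
    · subst h; exact J.top_mem zero
    · rcases sieve_zero S with h2 | h2
      · rw [h2]; exact J.top_mem zero
      · rwa [h2]

/-- The equivalence. -/
noncomputable def myEquiv : GrothendieckTopology WalkingParallelPair ≃ Prop × Prop where
  toFun J := ((⊥ : Sieve WalkingParallelPair.zero) ∈ J.sieves zero, lr ∈ J.sieves one)
  invFun pq := myTop pq.1 pq.2
  left_inv := by
    intro J
    apply GrothendieckTopology.ext
    funext X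
    cases X with
    | zero =>
      ext S
      exact (classify_zero J S).symm
    | one =>
      ext S
      exact (classify_one J S).symm
  right_inv := by
    intro ⟨p, q⟩
    have h1 : ((⊥ : Sieve WalkingParallelPair.zero) ∈ (myTop p q).sieves zero) = p := by
      apply propext
      constructor
      · rintro (h | h)
        · exact absurd h bot_ne_top_zero
        · exact h
      · exact Or.inr
    have h2 : (lr ∈ (myTop p q).sieves one) = q := by
      apply propext
      constructor
      · rintro (h | ⟨hq, _⟩ | ⟨_, hq⟩)
        · exact absurd h lr_ne_top
        · exact hq
        · exact hq
      · intro hq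
        exact Or.inr (Or.inl ⟨hq, le_refl _⟩)
    show ((⊥ : Sieve WalkingParallelPair.zero) ∈ (myTop p q).sieves zero,
      lr ∈ (myTop p q).sieves one) = (p, q)
    rw [h1, h2]

end Stmt18Aux

theorem stmt18 : Nat.card (GrothendieckTopology WalkingParallelPair) = 4 := by
  rw [Nat.card_congr Stmt18Aux.myEquiv]
  rw [Nat.card_prod]
  rw [Nat.card_congr Equiv.propEquivBool]
  simp [Nat.card_eq_fintype_card]
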